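/- arXiv:2311.05416 — 3 statements merged into one kernel-verified Lean document; each statement's English description precedes it below -/
import Mathlib

section
/- Let H : (0,∞) × ℝ^d → ℝ be C³ and suppose that for some constant C̄ > 0 and all m > 0, p ∈ ℝ^d: |H_{pp}(m,p)| ≤ C̄, |H_{pm}(m,p)| ≤ C̄|p|, |H_{ppp}(m,p)| ≤ C̄, |H_{ppm}(m,p)| ≤ C̄, and |H_{mmp}(m,p)| ≤ C̄|p|. Then for all R, M > 0 there exists a constant C > 0, depending only on C̄, R and M, such that for all m, m' with 0 < m ≤ M and m' > 0, and all p, p' ∈ ℝ^d with |p| ≤ R, setting δp = p' - p and δm = m' - m: |m'·H_p(m',p') - m·H_p(m,p) - m'·H_{pp}(m',p')δp - δm·H_p(m',p') - m'·H_{pm}(m',p')δm| ≤ C(|δp|² + |δm|² + |δp|⁴ + |δm|⁴ + |δm|³ + |δm|⁶). -/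
open scoped RealInnerProductSpace

noncomputable section

/-- Euclidean space ℝ^d. -/
abbrev E (d : ℕ) : Type := EuclideanSpace ℝ (Fin d)

/-- `H_p`: gradient of `H = H(m,p)` in the variable `p`. -/
def Hp {d : ℕ} (H : ℝ → E d → ℝ) (m : ℝ) (p : E d) : E d := gradient (H m) p

/-- `H_m`: partial derivative of `H = H(m,p)` in the variable `m`. -/
def Hm {d : ℕ} (H : ℝ → E d → ℝ) (m : ℝ) (p : E d) : ℝ :=
  deriv (fun s => H s p) m

/-- `H_pp`: Hessian of `H` in `p`, as a continuous linear map (operator norm). -/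
def Hpp {d : ℕ} (H : ℝ → E d → ℝ) (m : ℝ) (p : E d) : E d →L[ℝ] E d :=
  fderiv ℝ (fun q => Hp H m q) p

/-- `H_pm`: gradient in `p` of `H_m`. -/
def Hpm {d : ℕ} (H : ℝ → E d → ℝ) (m : ℝ) (p : E d) : E d :=
  gradient (fun q => Hm H m q) p

/-- `H_mm`: second derivative of `H` in `m`. -/
def Hmm {d : ℕ} (H : ℝ → E d → ℝ) (m : ℝ) (p : E d) : ℝ :=
  deriv (fun s => Hm H s p) m

namespace TaylorAux
open scoped Topology

def Lg (d : ℕ) : ((E d) →L[ℝ] ℝ) →L[ℝ] E d :=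
  LinearMap.mkContinuous
    { toFun := fun A => (InnerProductSpace.toDual ℝ (E d)).symm A
      map_add' := fun A B => map_add _ A B
      map_smul' := fun r A => by
        simp [LinearIsometryEquiv.map_smulₛₗ, starRingEnd_apply] }
    1 (fun A => by simp [LinearIsometryEquiv.norm_map])
lemma Lg_apply {d : ℕ} (A : (E d) →L[ℝ] ℝ) :
    Lg d A = (InnerProductSpace.toDual ℝ (E d)).symm A := rfl
lemma norm_Lg {d : ℕ} (A : (E d) →L[ℝ] ℝ) : ‖Lg d A‖ = ‖A‖ := by
  rw [Lg_apply, LinearIsometryEquiv.norm_map]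
lemma norm_Lg_le (d : ℕ) : ‖Lg d‖ ≤ 1 :=
  LinearMap.mkContinuous_norm_le _ zero_le_one _
lemma gradient_eq_Lg {d : ℕ} (f : E d → ℝ) (x : E d) :
    gradient f x = Lg d (fderiv ℝ f x) := rfl

instance instNACG2 {d : ℕ} : NormedAddCommGroup (E d →L[ℝ] E d →L[ℝ] ℝ) :=
  ContinuousLinearMap.toNormedAddCommGroup
instance instNS2 {d : ℕ} : NormedSpace ℝ (E d →L[ℝ] E d →L[ℝ] ℝ) :=
  ContinuousLinearMap.toNormedSpace
instance instNACG2' {d : ℕ} : NormedAddCommGroup ((ℝ × E d) →L[ℝ] (ℝ × E d) →L[ℝ] ℝ) :=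
  ContinuousLinearMap.toNormedAddCommGroup
instance instNS2' {d : ℕ} : NormedSpace ℝ ((ℝ × E d) →L[ℝ] (ℝ × E d) →L[ℝ] ℝ) :=
  ContinuousLinearMap.toNormedSpace

-- norm identities
lemma norm_fd2 {d : ℕ} (g : E d → ℝ) (x : E d) :
    ‖fderiv ℝ (fderiv ℝ g) x‖ = ‖iteratedFDeriv ℝ 2 g x‖ := by
  rw [← norm_iteratedFDeriv_zero (𝕜 := ℝ) (f := fderiv ℝ (fderiv ℝ g)) (x := x),
    norm_iteratedFDeriv_fderiv, norm_iteratedFDeriv_fderiv]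

lemma norm_fd3 {d : ℕ} (g : E d → ℝ) (x : E d) :
    ‖fderiv ℝ (fderiv ℝ (fderiv ℝ g)) x‖ = ‖iteratedFDeriv ℝ 3 g x‖ := by
  rw [← norm_iteratedFDeriv_zero (𝕜 := ℝ) (f := fderiv ℝ (fderiv ℝ (fderiv ℝ g))) (x := x),
    norm_iteratedFDeriv_fderiv, norm_iteratedFDeriv_fderiv, norm_iteratedFDeriv_fderiv]

variable {d : ℕ} {f : E d → ℝ}

lemma hasFDerivAt_grad (hf : ContDiff ℝ 3 f) (q : E d) :
    HasFDerivAt (fun y => gradient f y)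
      ((Lg d).comp (fderiv ℝ (fderiv ℝ f) q)) q := by
  have h2 : ContDiff ℝ 2 (fderiv ℝ f) := hf.fderiv_right (by norm_num)
  have h1 : HasFDerivAt (fderiv ℝ f) (fderiv ℝ (fderiv ℝ f) q) q :=
    ((h2.differentiable (by norm_num)) q).hasFDerivAt
  exact ((Lg d).hasFDerivAt).comp q h1

lemma fderiv_grad_eq (hf : ContDiff ℝ 3 f) (q : E d) :
    fderiv ℝ (fun y => gradient f y) q = (Lg d).comp (fderiv ℝ (fderiv ℝ f) q) :=
  (hasFDerivAt_grad hf q).fderiv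

lemma lip_fd2 (hf : ContDiff ℝ 3 f) {Cb : ℝ}
    (hb : ∀ q, ‖iteratedFDeriv ℝ 3 f q‖ ≤ Cb) (q q' : E d) :
    ‖fderiv ℝ (fderiv ℝ f) q - fderiv ℝ (fderiv ℝ f) q'‖ ≤ Cb * ‖q - q'‖ := by
  have hdiff : ∀ x ∈ (Set.univ : Set (E d)), DifferentiableAt ℝ (fderiv ℝ (fderiv ℝ f)) x := by
    intro x _
    have : ContDiff ℝ 1 (fderiv ℝ (fderiv ℝ f)) :=
      (hf.fderiv_right (m := 2) (by norm_num)).fderiv_right (m := 1) (by norm_num)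
    exact (this.differentiable one_ne_zero) x
  have hbd : ∀ x ∈ (Set.univ : Set (E d)), ‖fderiv ℝ (fderiv ℝ (fderiv ℝ f)) x‖ ≤ Cb := by
    intro x _; rw [norm_fd3]; exact hb x
  exact convex_univ.norm_image_sub_le_of_norm_fderiv_le hdiff hbd (Set.mem_univ _) (Set.mem_univ _)

/-- second-order Taylor estimate for the gradient. -/
lemma taylor_p (hf : ContDiff ℝ 3 f) {Cb : ℝ}
    (hb : ∀ q, ‖iteratedFDeriv ℝ 3 f q‖ ≤ Cb) (p p' : E d) :
    ‖gradient f p - gradient f p' - fderiv ℝ (fun y => gradient f y) p' (p - p')‖ ≤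
      Cb * ‖p - p'‖ ^ 2 := by
  set B := fderiv ℝ (fun y => gradient f y) p' with hB
  set s : Set (E d) := Metric.closedBall p' ‖p - p'‖ with hs
  have hmem : p ∈ s := by
    simp [hs, Metric.mem_closedBall, dist_eq_norm]
  have hmem' : p' ∈ s := by
    simp [hs, Metric.mem_closedBall]
  have hder : ∀ q ∈ s, HasFDerivWithinAt (fun y => gradient f y - B (y - p'))
      ((Lg d).comp (fderiv ℝ (fderiv ℝ f) q) - B) s q := by
    intro q _
    have h1 := (hasFDerivAt_grad hf q)
    have h2 : HasFDerivAt (fun y : E d => B (y - p')) B q := by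
      simpa using (B.hasFDerivAt (x := q)).sub_const (B p')
    exact (h1.sub h2).hasFDerivWithinAt
  have hbd : ∀ q ∈ s, ‖(Lg d).comp (fderiv ℝ (fderiv ℝ f) q) - B‖ ≤ Cb * ‖p - p'‖ := by
    intro q hq
    rw [hB, fderiv_grad_eq hf, ← ContinuousLinearMap.comp_sub]
    calc ‖(Lg d).comp (fderiv ℝ (fderiv ℝ f) q - fderiv ℝ (fderiv ℝ f) p')‖
        ≤ ‖Lg d‖ * ‖fderiv ℝ (fderiv ℝ f) q - fderiv ℝ (fderiv ℝ f) p'‖ :=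
          ContinuousLinearMap.opNorm_comp_le _ _
      _ ≤ 1 * (Cb * ‖q - p'‖) := by
          apply mul_le_mul (norm_Lg_le d) (lip_fd2 hf hb q p') (norm_nonneg _) zero_le_one
      _ ≤ Cb * ‖p - p'‖ := by
          rw [one_mul]
          have hq' : ‖q - p'‖ ≤ ‖p - p'‖ := by
            simpa [dist_eq_norm] using (Metric.mem_closedBall.1 hq)
          have hCb : 0 ≤ Cb := le_trans (norm_nonneg _) (hb p')
          nlinarith [norm_nonneg (q - p')]
  have := (convex_closedBall p' ‖p - p'‖).norm_image_sub_le_of_norm_hasFDerivWithin_le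
    hder hbd hmem' hmem
  -- this : ‖(g p - B (p - p')) - (g p' - B (p' - p'))‖ ≤ Cb * ‖p-p'‖ * ‖p - p'‖
  have heq : (gradient f p - B (p - p')) - (gradient f p' - B (p' - p')) =
      gradient f p - gradient f p' - B (p - p') := by
    simp only [sub_self, map_zero, map_sub, sub_zero]
    abel
  rw [heq] at this
  calc ‖gradient f p - gradient f p' - B (p - p')‖ ≤ Cb * ‖p - p'‖ * ‖p - p'‖ := this
    _ = Cb * ‖p - p'‖ ^ 2 := by ring

/-- Lipschitz bound for the gradient of a C² function with bounded second derivative. -/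
lemma lip_grad2 {u : E d → ℝ} (hu : ContDiff ℝ 2 u) {K : ℝ}
    (hb : ∀ q, ‖iteratedFDeriv ℝ 2 u q‖ ≤ K) (q q' : E d) :
    ‖gradient u q - gradient u q'‖ ≤ K * ‖q - q'‖ := by
  rw [gradient_eq_Lg, gradient_eq_Lg, ← map_sub, norm_Lg]
  have hdiff : ∀ x ∈ (Set.univ : Set (E d)), DifferentiableAt ℝ (fderiv ℝ u) x := by
    intro x _
    exact ((hu.fderiv_right (m := 1) (by norm_num)).differentiable one_ne_zero) x
  have hbd : ∀ x ∈ (Set.univ : Set (E d)), ‖fderiv ℝ (fderiv ℝ u) x‖ ≤ K := by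
    intro x _; rw [norm_fd2]; exact hb x
  exact convex_univ.norm_image_sub_le_of_norm_fderiv_le hdiff hbd (Set.mem_univ _) (Set.mem_univ _)


variable {d : ℕ}


def Jf (H : ℝ → E d → ℝ) : ℝ × E d → ℝ := fun q => H q.1 q.2
def ι (d : ℕ) : E d →L[ℝ] ℝ × E d := ContinuousLinearMap.inr ℝ ℝ (E d)
def Ψ (d : ℕ) : ((ℝ × E d) →L[ℝ] ℝ) →L[ℝ] E d :=
  (Lg d).comp ((ContinuousLinearMap.compL ℝ (E d) (ℝ × E d) ℝ).flip (ι d))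
lemma Ψ_apply (A : (ℝ × E d) →L[ℝ] ℝ) : Ψ d A = Lg d (A.comp (ι d)) := rfl

lemma openU : IsOpen {q : ℝ × E d | 0 < q.1} :=
  isOpen_lt continuous_const continuous_fst

variable {H : ℝ → E d → ℝ}

lemma cda (hC3 : ContDiffOn ℝ 3 (Jf H) {q : ℝ × E d | 0 < q.1})
    {x : ℝ × E d} (hx : 0 < x.1) : ContDiffAt ℝ 3 (Jf H) x :=
  hC3.contDiffAt (openU.mem_nhds hx)

lemma hG (hC3 : ContDiffOn ℝ 3 (Jf H) {q : ℝ × E d | 0 < q.1})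
    {x : ℝ × E d} (hx : 0 < x.1) : HasFDerivAt (Jf H) (fderiv ℝ (Jf H) x) x :=
  ((cda hC3 hx).differentiableAt (by norm_num)).hasFDerivAt

lemma hG2 (hC3 : ContDiffOn ℝ 3 (Jf H) {q : ℝ × E d | 0 < q.1})
    {x : ℝ × E d} (hx : 0 < x.1) :
    HasFDerivAt (fderiv ℝ (Jf H)) (fderiv ℝ (fderiv ℝ (Jf H)) x) x :=
  ((((cda hC3 hx).fderiv_right (m := 2) (by norm_num))).differentiableAt
    (by norm_num)).hasFDerivAt

lemma hG3 (hC3 : ContDiffOn ℝ 3 (Jf H) {q : ℝ × E d | 0 < q.1})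
    {x : ℝ × E d} (hx : 0 < x.1) :
    HasFDerivAt (fderiv ℝ (fderiv ℝ (Jf H)))
      (fderiv ℝ (fderiv ℝ (fderiv ℝ (Jf H))) x) x :=
  (((((cda hC3 hx).fderiv_right (m := 2) (by norm_num))).fderiv_right (m := 1)
    (by norm_num)).differentiableAt (by norm_num)).hasFDerivAt

lemma SYM2 (hC3 : ContDiffOn ℝ 3 (Jf H) {q : ℝ × E d | 0 < q.1})
    {x : ℝ × E d} (hx : 0 < x.1) (v w : ℝ × E d) :
    fderiv ℝ (fderiv ℝ (Jf H)) x v w = fderiv ℝ (fderiv ℝ (Jf H)) x w v := by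
  have hev : ∀ᶠ y in 𝓝 x, HasFDerivAt (Jf H) (fderiv ℝ (Jf H) y) y := by
    filter_upwards [openU.mem_nhds hx] with y hy using hG hC3 hy
  exact second_derivative_symmetric_of_eventually hev (hG2 hC3 hx) v w

lemma SYM3a (hC3 : ContDiffOn ℝ 3 (Jf H) {q : ℝ × E d | 0 < q.1})
    {x : ℝ × E d} (hx : 0 < x.1) (u v : ℝ × E d) :
    fderiv ℝ (fderiv ℝ (fderiv ℝ (Jf H))) x u v
      = fderiv ℝ (fderiv ℝ (fderiv ℝ (Jf H))) x v u := by
  have hev : ∀ᶠ y in 𝓝 x, HasFDerivAt (fderiv ℝ (Jf H))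
      (fderiv ℝ (fderiv ℝ (Jf H)) y) y := by
    filter_upwards [openU.mem_nhds hx] with y hy using hG2 hC3 hy
  exact second_derivative_symmetric_of_eventually hev (hG3 hC3 hx) u v

lemma SYM3b (hC3 : ContDiffOn ℝ 3 (Jf H) {q : ℝ × E d | 0 < q.1})
    {x : ℝ × E d} (hx : 0 < x.1) (u v w : ℝ × E d) :
    fderiv ℝ (fderiv ℝ (fderiv ℝ (Jf H))) x u v w
      = fderiv ℝ (fderiv ℝ (fderiv ℝ (Jf H))) x u w v := by
  set G2 := fderiv ℝ (fderiv ℝ (Jf H)) with hG2def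
  set G3 := fderiv ℝ (fderiv ℝ (fderiv ℝ (Jf H))) with hG3def
  let ev1 : ((ℝ × E d) →L[ℝ] (ℝ × E d) →L[ℝ] ℝ) →L[ℝ] ℝ :=
    (ContinuousLinearMap.apply ℝ ℝ w).comp
      (ContinuousLinearMap.apply ℝ ((ℝ × E d) →L[ℝ] ℝ) v)
  let ev2 : ((ℝ × E d) →L[ℝ] (ℝ × E d) →L[ℝ] ℝ) →L[ℝ] ℝ :=
    (ContinuousLinearMap.apply ℝ ℝ v).comp
      (ContinuousLinearMap.apply ℝ ((ℝ × E d) →L[ℝ] ℝ) w)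
  have h1 : HasFDerivAt (fun y => G2 y v w) (ev1.comp (G3 x)) x := by
    have := ev1.hasFDerivAt.comp x (hG3 hC3 hx)
    have heq : (fun y => ev1 (G2 y)) = fun y => G2 y v w := by
      funext y; simp [ev1]
    rw [← heq]; exact this
  have h2 : HasFDerivAt (fun y => G2 y w v) (ev2.comp (G3 x)) x := by
    have := ev2.hasFDerivAt.comp x (hG3 hC3 hx)
    have heq : (fun y => ev2 (G2 y)) = fun y => G2 y w v := by
      funext y; simp [ev2]
    rw [← heq]; exact this
  have heq2 : (fun y => G2 y v w) =ᶠ[𝓝 x] (fun y => G2 y w v) := by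
    filter_upwards [openU.mem_nhds hx] with y hy using SYM2 hC3 hy v w
  have h2' : HasFDerivAt (fun y => G2 y v w) (ev2.comp (G3 x)) x :=
    h2.congr_of_eventuallyEq heq2
  have := h1.unique h2'
  have : ev1 (G3 x u) = ev2 (G3 x u) := by
    rw [ContinuousLinearMap.ext_iff] at this
    simpa using this u
  simpa [ev1, ev2] using this

lemma E2 (hC3 : ContDiffOn ℝ 3 (Jf H) {q : ℝ × E d | 0 < q.1})
    {s : ℝ} (hs : 0 < s) (q : E d) :
    Hm H s q = fderiv ℝ (Jf H) (s, q) (1, 0) := by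
  have hd : HasDerivAt (fun t => Jf H (t, q)) (fderiv ℝ (Jf H) (s, q) (1, 0)) s :=
    (hG hC3 hs).comp_hasDerivAt s ((hasDerivAt_id s).prodMk (hasDerivAt_const s q))
  exact hd.deriv.symm ▸ rfl

lemma E1 (hC3 : ContDiffOn ℝ 3 (Jf H) {q : ℝ × E d | 0 < q.1})
    {s : ℝ} (hs : 0 < s) (q : E d) :
    Hp H s q = Lg d ((fderiv ℝ (Jf H) (s, q)).comp (ι d)) := by
  have hfd : HasFDerivAt (H s) ((fderiv ℝ (Jf H) (s, q)).comp (ι d)) q :=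
    (hG hC3 hs).comp q (hasFDerivAt_prodMk_right s q)
  rw [Hp, gradient_eq_Lg, hfd.fderiv]

lemma sectionContDiff (hC3 : ContDiffOn ℝ 3 (Jf H) {q : ℝ × E d | 0 < q.1})
    {m : ℝ} (hm : 0 < m) : ContDiff ℝ 3 (H m) := by
  rw [contDiff_iff_contDiffAt]
  intro q
  have h := ContDiffAt.comp (g := Jf H) (f := fun y : E d => (m, y)) q
    (cda hC3 (x := (m, q)) hm) (contDiffAt_const.prodMk contDiffAt_id)
  exact h

lemma contDiff_Hm (hC3 : ContDiffOn ℝ 3 (Jf H) {q : ℝ × E d | 0 < q.1})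
    {m : ℝ} (hm : 0 < m) : ContDiff ℝ 2 (fun q => Hm H m q) := by
  rw [contDiff_iff_contDiffAt]
  intro q
  have h2 : ContDiffAt ℝ 2 (fun q : E d => fderiv ℝ (Jf H) (m, q)) q := by
    have h := ContDiffAt.comp (g := fderiv ℝ (Jf H)) (f := fun y : E d => (m, y)) q
      ((cda hC3 (x := (m, q)) hm).fderiv_right (m := 2) (by norm_num))
      (contDiffAt_const.prodMk contDiffAt_id)
    exact h
  have h3 : ContDiffAt ℝ 2 (fun q : E d => fderiv ℝ (Jf H) (m, q) (1, 0)) q :=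
    h2.clm_apply contDiffAt_const
  exact h3.congr_of_eventuallyEq
    (Filter.Eventually.of_forall fun q => E2 hC3 hm q)

lemma E4 (hC3 : ContDiffOn ℝ 3 (Jf H) {q : ℝ × E d | 0 < q.1})
    {s : ℝ} (hs : 0 < s) (p : E d) :
    Hpm H s p = Ψ d (fderiv ℝ (fderiv ℝ (Jf H)) (s, p) (1, 0)) := by
  have hfun : (fun q => Hm H s q) = fun q => fderiv ℝ (Jf H) (s, q) (1, 0) :=
    funext fun q => E2 hC3 hs q
  rw [Hpm, gradient_eq_Lg, hfun]
  set ev : ((ℝ × E d) →L[ℝ] ℝ) →L[ℝ] ℝ :=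
    ContinuousLinearMap.apply ℝ ℝ ((1 : ℝ), (0 : E d)) with hev
  have hc : HasFDerivAt (fun q : E d => fderiv ℝ (Jf H) (s, q))
      ((fderiv ℝ (fderiv ℝ (Jf H)) (s, p)).comp (ι d)) p :=
    (hG2 hC3 hs).comp p (hasFDerivAt_prodMk_right s p)
  have happ : HasFDerivAt (fun q : E d => fderiv ℝ (Jf H) (s, q) (1, 0))
      (ev.comp ((fderiv ℝ (fderiv ℝ (Jf H)) (s, p)).comp (ι d))) p := by
    have := ev.hasFDerivAt.comp p hc
    have heq : (fun q : E d => ev (fderiv ℝ (Jf H) (s, q)))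
        = fun q : E d => fderiv ℝ (Jf H) (s, q) (1, 0) := by
      funext y; simp [hev]
    rw [← heq]; exact this
  rw [happ.fderiv, Ψ_apply]
  congr 1
  ext v
  simp only [ContinuousLinearMap.coe_comp', Function.comp_apply, hev,
    ContinuousLinearMap.apply_apply, ι, ContinuousLinearMap.inr_apply]
  exact SYM2 hC3 hs (0, v) (1, 0)

lemma E3' (hC3 : ContDiffOn ℝ 3 (Jf H) {q : ℝ × E d | 0 < q.1})
    {s : ℝ} (hs : 0 < s) (p : E d) :
    HasDerivAt (fun t => Hp H t p) (Hpm H s p) s := by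
  have step1 : HasDerivAt (fun t => fderiv ℝ (Jf H) (t, p))
      (fderiv ℝ (fderiv ℝ (Jf H)) (s, p) (1, 0)) s :=
    (hG2 hC3 hs).comp_hasDerivAt s ((hasDerivAt_id s).prodMk (hasDerivAt_const s p))
  have step2 : HasDerivAt (fun t => Ψ d (fderiv ℝ (Jf H) (t, p)))
      (Ψ d (fderiv ℝ (fderiv ℝ (Jf H)) (s, p) (1, 0))) s :=
    (Ψ d).hasFDerivAt.comp_hasDerivAt s step1
  have heq : (fun t => Hp H t p) =ᶠ[𝓝 s] (fun t => Ψ d (fderiv ℝ (Jf H) (t, p))) := by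
    filter_upwards [eventually_gt_nhds hs] with t ht
    rw [E1 hC3 ht p, Ψ_apply]
  rw [E4 hC3 hs p]
  exact step2.congr_of_eventuallyEq heq

lemma E5' (hC3 : ContDiffOn ℝ 3 (Jf H) {q : ℝ × E d | 0 < q.1})
    {s : ℝ} (hs : 0 < s) (p : E d) :
    HasDerivAt (fun t => Hpm H t p)
      (Ψ d (fderiv ℝ (fderiv ℝ (fderiv ℝ (Jf H))) (s, p) (1, 0) (1, 0))) s := by
  set ev : ((ℝ × E d) →L[ℝ] (ℝ × E d) →L[ℝ] ℝ) →L[ℝ] ((ℝ × E d) →L[ℝ] ℝ) :=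
    ContinuousLinearMap.apply ℝ ((ℝ × E d) →L[ℝ] ℝ) ((1 : ℝ), (0 : E d)) with hev
  have step1 : HasDerivAt (fun t => fderiv ℝ (fderiv ℝ (Jf H)) (t, p))
      (fderiv ℝ (fderiv ℝ (fderiv ℝ (Jf H))) (s, p) (1, 0)) s :=
    (hG3 hC3 hs).comp_hasDerivAt s ((hasDerivAt_id s).prodMk (hasDerivAt_const s p))
  have step2 : HasDerivAt (fun t => fderiv ℝ (fderiv ℝ (Jf H)) (t, p) (1, 0))
      (fderiv ℝ (fderiv ℝ (fderiv ℝ (Jf H))) (s, p) (1, 0) (1, 0)) s := by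
    have := ev.hasFDerivAt.comp_hasDerivAt s step1
    have heq : (fun t => ev (fderiv ℝ (fderiv ℝ (Jf H)) (t, p)))
        = fun t => fderiv ℝ (fderiv ℝ (Jf H)) (t, p) (1, 0) := by
      funext y; simp [hev]
    rw [← heq]
    have heq2 : ev (fderiv ℝ (fderiv ℝ (fderiv ℝ (Jf H))) (s, p) (1, 0))
        = fderiv ℝ (fderiv ℝ (fderiv ℝ (Jf H))) (s, p) (1, 0) (1, 0) := by
      simp [hev]
    rw [← heq2]; exact this
  have step3 : HasDerivAt
      (fun t => Ψ d (fderiv ℝ (fderiv ℝ (Jf H)) (t, p) (1, 0)))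
      (Ψ d (fderiv ℝ (fderiv ℝ (fderiv ℝ (Jf H))) (s, p) (1, 0) (1, 0))) s :=
    (Ψ d).hasFDerivAt.comp_hasDerivAt s step2
  have heq : (fun t => Hpm H t p)
      =ᶠ[𝓝 s] (fun t => Ψ d (fderiv ℝ (fderiv ℝ (Jf H)) (t, p) (1, 0))) := by
    filter_upwards [eventually_gt_nhds hs] with t ht
    rw [E4 hC3 ht p]
  exact step3.congr_of_eventuallyEq heq

lemma E6 (hC3 : ContDiffOn ℝ 3 (Jf H) {q : ℝ × E d | 0 < q.1})
    {s : ℝ} (hs : 0 < s) (p : E d) :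
    gradient (fun q => Hmm H s q) p
      = Ψ d (fderiv ℝ (fderiv ℝ (fderiv ℝ (Jf H))) (s, p) (1, 0) (1, 0)) := by
  have ha : ∀ q : E d, Hmm H s q = fderiv ℝ (fderiv ℝ (Jf H)) (s, q) (1, 0) (1, 0) := by
    intro q
    set ev : ((ℝ × E d) →L[ℝ] ℝ) →L[ℝ] ℝ :=
      ContinuousLinearMap.apply ℝ ℝ ((1 : ℝ), (0 : E d)) with hev
    have step1 : HasDerivAt (fun t => fderiv ℝ (Jf H) (t, q))
        (fderiv ℝ (fderiv ℝ (Jf H)) (s, q) (1, 0)) s :=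
      (hG2 hC3 hs).comp_hasDerivAt s ((hasDerivAt_id s).prodMk (hasDerivAt_const s q))
    have step2 : HasDerivAt (fun t => fderiv ℝ (Jf H) (t, q) (1, 0))
        (fderiv ℝ (fderiv ℝ (Jf H)) (s, q) (1, 0) (1, 0)) s := by
      have := ev.hasFDerivAt.comp_hasDerivAt s step1
      have heq : (fun t => ev (fderiv ℝ (Jf H) (t, q)))
          = fun t => fderiv ℝ (Jf H) (t, q) (1, 0) := by
        funext y; simp [hev]
      have heq2 : ev (fderiv ℝ (fderiv ℝ (Jf H)) (s, q) (1, 0))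
          = fderiv ℝ (fderiv ℝ (Jf H)) (s, q) (1, 0) (1, 0) := by simp [hev]
      rw [← heq, ← heq2]; exact this
    have step3 : HasDerivAt (fun t => Hm H t q)
        (fderiv ℝ (fderiv ℝ (Jf H)) (s, q) (1, 0) (1, 0)) s := by
      apply step2.congr_of_eventuallyEq
      filter_upwards [eventually_gt_nhds hs] with t ht
      rw [E2 hC3 ht q]
    exact step3.deriv.symm ▸ rfl
  rw [gradient_eq_Lg, funext ha]
  set ev2 : ((ℝ × E d) →L[ℝ] (ℝ × E d) →L[ℝ] ℝ) →L[ℝ] ℝ :=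
    (ContinuousLinearMap.apply ℝ ℝ ((1 : ℝ), (0 : E d))).comp
      (ContinuousLinearMap.apply ℝ ((ℝ × E d) →L[ℝ] ℝ) ((1 : ℝ), (0 : E d))) with hev2
  have hc : HasFDerivAt (fun q : E d => fderiv ℝ (fderiv ℝ (Jf H)) (s, q))
      ((fderiv ℝ (fderiv ℝ (fderiv ℝ (Jf H))) (s, p)).comp (ι d)) p :=
    (hG3 hC3 hs).comp p (hasFDerivAt_prodMk_right s p)
  have happ : HasFDerivAt
      (fun q : E d => fderiv ℝ (fderiv ℝ (Jf H)) (s, q) (1, 0) (1, 0))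
      (ev2.comp ((fderiv ℝ (fderiv ℝ (fderiv ℝ (Jf H))) (s, p)).comp (ι d))) p := by
    have := ev2.hasFDerivAt.comp p hc
    have heq : (fun q : E d => ev2 (fderiv ℝ (fderiv ℝ (Jf H)) (s, q)))
        = fun q : E d => fderiv ℝ (fderiv ℝ (Jf H)) (s, q) (1, 0) (1, 0) := by
      funext y; simp [hev2]
    rw [← heq]; exact this
  rw [happ.fderiv, Ψ_apply]
  congr 1
  ext v
  simp only [ContinuousLinearMap.coe_comp', Function.comp_apply, hev2,
    ContinuousLinearMap.apply_apply, ι, ContinuousLinearMap.inr_apply]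
  calc fderiv ℝ (fderiv ℝ (fderiv ℝ (Jf H))) (s, p) (0, v) (1, 0) (1, 0)
      = fderiv ℝ (fderiv ℝ (fderiv ℝ (Jf H))) (s, p) (1, 0) (0, v) (1, 0) := by
        rw [SYM3a hC3 hs (0, v) (1, 0)]
    _ = fderiv ℝ (fderiv ℝ (fderiv ℝ (Jf H))) (s, p) (1, 0) (1, 0) (0, v) :=
        SYM3b hC3 hs (1, 0) (0, v) (1, 0)

end TaylorAux

set_option maxHeartbeats 2000000

/-- second-order Taylor remainder estimate for the map
`Φ(m,p) = m·H_p(m,p)` around `(m',p')`. If `H` is C³ with `|H_pp| ≤ C̄`,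
`|H_pm| ≤ C̄|p|`, `|H_ppp| ≤ C̄`, `|H_ppm| ≤ C̄` and `|H_mmp| ≤ C̄|p|`, then for
all `R, M > 0` there is `C > 0` (depending only on `C̄, R, M`) such that for all
`0 < m ≤ M`, `m' > 0`, `|p| ≤ R`, with `δp = p' - p` and `δm = m' - m`:
`|m'H_p(m',p') - mH_p(m,p) - m'H_pp(m',p')δp - δm·H_p(m',p') - m'H_pm(m',p')δm|
  ≤ C(|δp|² + |δm|² + |δp|⁴ + |δm|⁴ + |δm|³ + |δm|⁶)`. -/
theorem mHp_second_order_taylor_estimate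
    (d : ℕ) (H : ℝ → E d → ℝ)
    (hC3 : ContDiffOn ℝ 3 (fun q : ℝ × E d => H q.1 q.2) {q : ℝ × E d | 0 < q.1})
    (Cb : ℝ) (hCb : 0 < Cb)
    (hpp : ∀ m : ℝ, 0 < m → ∀ p : E d, ‖Hpp H m p‖ ≤ Cb)
    (hpm : ∀ m : ℝ, 0 < m → ∀ p : E d, ‖Hpm H m p‖ ≤ Cb * ‖p‖)
    (hppp : ∀ m : ℝ, 0 < m → ∀ p : E d,
      ‖iteratedFDeriv ℝ 3 (fun q => H m q) p‖ ≤ Cb)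
    (hppm : ∀ m : ℝ, 0 < m → ∀ p : E d,
      ‖iteratedFDeriv ℝ 2 (fun q => Hm H m q) p‖ ≤ Cb)
    (hmmp : ∀ m : ℝ, 0 < m → ∀ p : E d,
      ‖gradient (fun q => Hmm H m q) p‖ ≤ Cb * ‖p‖) :
    ∀ R M : ℝ, 0 < R → 0 < M → ∃ C : ℝ, 0 < C ∧
      ∀ (m m' : ℝ) (p p' : E d), 0 < m → m ≤ M → 0 < m' → ‖p‖ ≤ R →
        ‖m' • Hp H m' p' - m • Hp H m p - m' • Hpp H m' p' (p' - p) -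
            (m' - m) • Hp H m' p' - (m' * (m' - m)) • Hpm H m' p'‖ ≤
          C * (‖p' - p‖ ^ 2 + |m' - m| ^ 2 + ‖p' - p‖ ^ 4 + |m' - m| ^ 4 +
            |m' - m| ^ 3 + |m' - m| ^ 6) := by
  have hC3' : ContDiffOn ℝ 3 (TaylorAux.Jf H) {q : ℝ × E d | 0 < q.1} := hC3
  intro R M hR hM
  refine ⟨Cb * (2 * M + R * (2 + M) + R + 2) + 1, by positivity, ?_⟩
  intro m m' p p' hm hmM hm' hpR
  set D : ℝ := ‖p' - p‖ with hD_def
  set e : ℝ := |m' - m| with he_def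
  have hD : (0 : ℝ) ≤ D := norm_nonneg _
  have he : (0 : ℝ) ≤ e := abs_nonneg _
  have hme : m' ≤ M + e := by
    have h1 : m' - m ≤ e := le_abs_self _
    linarith
  have hDrev : D = ‖p - p'‖ := by rw [hD_def, norm_sub_rev]
  -- abbreviations
  set a : E d := Hp H m' p' with ha_def
  set b : E d := Hp H m' p with hb_def
  set c : E d := Hp H m p with hc_def
  set T : E d →L[ℝ] E d := Hpp H m' p' with hT_def
  set y : E d := Hpm H m' p with hy_def
  set x : E d := Hpm H m' p' with hx_def
  have hf : ContDiff ℝ 3 (H m') := TaylorAux.sectionContDiff hC3' hm'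
  have hb3 : ∀ q, ‖iteratedFDeriv ℝ 3 (H m') q‖ ≤ Cb := hppp m' hm'
  -- (A) Taylor estimate in p
  have tA : ‖b - a - T (p - p')‖ ≤ Cb * D ^ 2 := by
    have h := TaylorAux.taylor_p hf hb3 p p'
    rw [hDrev]
    exact h
  -- (V3) Lipschitz bound for Hp in p
  have lipHp : ‖b - a‖ ≤ Cb * D := by
    have hdiff : ∀ z ∈ (Set.univ : Set (E d)),
        DifferentiableAt ℝ (fun q => Hp H m' q) z := fun z _ =>
      (TaylorAux.hasFDerivAt_grad hf z).differentiableAt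
    have hbd : ∀ z ∈ (Set.univ : Set (E d)),
        ‖fderiv ℝ (fun q => Hp H m' q) z‖ ≤ Cb := fun z _ => hpp m' hm' z
    have h := convex_univ.norm_image_sub_le_of_norm_fderiv_le hdiff hbd
      (Set.mem_univ p') (Set.mem_univ p)
    rw [hDrev]
    exact h
  -- (V4) Lipschitz bound for Hpm in p
  have lipHpm : ‖y - x‖ ≤ Cb * D := by
    have h := TaylorAux.lip_grad2 (TaylorAux.contDiff_Hm hC3' hm') (hppm m' hm') p p'
    rw [hDrev]
    exact h
  -- (B) one-dimensional Taylor estimate in m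
  set I : Set ℝ := Set.uIcc m m' with hI_def
  have hIconv : Convex ℝ I := convex_uIcc m m'
  have hmI : m ∈ I := Set.left_mem_uIcc
  have hm'I : m' ∈ I := Set.right_mem_uIcc
  have hpos : ∀ s ∈ I, (0 : ℝ) < s := by
    intro s hs
    rcases hs with ⟨h1, _⟩
    exact lt_of_lt_of_le (lt_inf_iff.2 ⟨hm, hm'⟩) h1
  have hle : ∀ s ∈ I, s ≤ M + e := by
    intro s hs
    rcases hs with ⟨_, h2⟩
    have : m ⊔ m' ≤ M + e := sup_le (by linarith) hme
    linarith [le_trans h2 this]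
  have hdiam : ∀ s ∈ I, |s - m'| ≤ e := by
    intro s hs
    rcases hs with ⟨h1, h2⟩
    have h3 : m ⊓ m' ≤ m' := inf_le_right
    have h4 : m' ≤ m ⊔ m' := le_sup_right
    have h5 : m ⊔ m' - m ⊓ m' = e := by
      rw [he_def]
      exact max_sub_min_eq_abs m m'
    rw [abs_le]
    constructor <;> linarith
  set γ : ℝ → E d := fun s => Hp H s p + s • Hpm H s p with hγ_def
  set K : ℝ := Cb * R * (2 + (M + e)) with hK_def
  have hK0 : 0 ≤ K := by positivity
  have hgderiv : ∀ s ∈ I, HasDerivAt (fun t => t • Hp H t p) (γ s) s := by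
    intro s hs
    have h1 := TaylorAux.E3' hC3' (hpos s hs) p
    have h2 := (hasDerivAt_id s).smul h1
    simp only [one_smul] at h2
    have h3 : γ s = s • Hpm H s p + Hp H s p := by rw [hγ_def]; abel
    rw [h3]
    exact h2
  have hγderiv : ∀ s ∈ I, HasDerivAt γ
      (Hpm H s p + (Hpm H s p + s • gradient (fun q => Hmm H s q) p)) s := by
    intro s hs
    have h1 := TaylorAux.E3' hC3' (hpos s hs) p
    have h2 := TaylorAux.E5' hC3' (hpos s hs) p
    rw [← TaylorAux.E6 hC3' (hpos s hs) p] at h2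
    have h3 := (hasDerivAt_id s).smul h2
    have h4 := h1.add h3
    simp only [one_smul] at h4
    have h5 : HasDerivAt γ
        (Hpm H s p + (s • gradient (fun q => Hmm H s q) p + Hpm H s p)) s := by
      rw [hγ_def]; exact h4
    convert h5 using 1
    abel
  have hγbound : ∀ s ∈ I,
      ‖Hpm H s p + (Hpm H s p + s • gradient (fun q => Hmm H s q) p)‖ ≤ K := by
    intro s hs
    have hs0 := hpos s hs
    have h1 : ‖Hpm H s p‖ ≤ Cb * R :=
      le_trans (hpm s hs0 p) (by nlinarith [hpR, hCb.le])
    have h2 : ‖gradient (fun q => Hmm H s q) p‖ ≤ Cb * R :=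
      le_trans (hmmp s hs0 p) (by nlinarith [hpR, hCb.le])
    have h3 : ‖s • gradient (fun q => Hmm H s q) p‖ ≤ (M + e) * (Cb * R) := by
      rw [norm_smul, Real.norm_eq_abs, abs_of_pos hs0]
      exact mul_le_mul (hle s hs) h2 (norm_nonneg _) (by linarith [hle s hs, hs0])
    calc ‖Hpm H s p + (Hpm H s p + s • gradient (fun q => Hmm H s q) p)‖
        ≤ ‖Hpm H s p‖ + (‖Hpm H s p‖ + ‖s • gradient (fun q => Hmm H s q) p‖) :=
          le_trans (norm_add_le _ _) (add_le_add_right (norm_add_le _ _) _)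
      _ ≤ Cb * R + (Cb * R + (M + e) * (Cb * R)) :=
          add_le_add h1 (add_le_add h1 h3)
      _ = K := by rw [hK_def]; ring
  have hold : ∀ s ∈ I, ‖γ s - γ m'‖ ≤ K * e := by
    intro s hs
    have := hIconv.norm_image_sub_le_of_norm_hasDerivWithin_le
      (f := γ) (f' := fun s => Hpm H s p + (Hpm H s p + s • gradient (fun q => Hmm H s q) p))
      (fun t ht => (hγderiv t ht).hasDerivWithinAt) hγbound hm'I hs
    calc ‖γ s - γ m'‖ ≤ K * ‖s - m'‖ := this
      _ ≤ K * e := by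
          rw [Real.norm_eq_abs]
          exact mul_le_mul_of_nonneg_left (hdiam s hs) hK0
  set w : E d := b + m' • y with hw_def
  have hwγ : w = γ m' := by rw [hw_def, hγ_def, hb_def, hy_def]
  have tB : ‖m' • b - m • c - (m' - m) • w‖ ≤ K * e * e := by
    have hf2 : ∀ s ∈ I, HasDerivWithinAt (fun s => s • Hp H s p - s • w) (γ s - w) I s := by
      intro s hs
      exact ((hgderiv s hs).sub (by simpa [one_smul] using (hasDerivAt_id s).smul_const w)).hasDerivWithinAt
    have hf2b : ∀ s ∈ I, ‖γ s - w‖ ≤ K * e := by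
      intro s hs; rw [hwγ]; exact hold s hs
    have := hIconv.norm_image_sub_le_of_norm_hasDerivWithin_le hf2 hf2b hmI hm'I
    have heq : (fun s => s • Hp H s p - s • w) m' - (fun s => s • Hp H s p - s • w) m
        = m' • b - m • c - (m' - m) • w := by
      simp only [hb_def, hc_def]
      module
    rw [heq] at this
    calc ‖m' • b - m • c - (m' - m) • w‖ ≤ K * e * ‖m' - m‖ := this
      _ = K * e * e := by rw [Real.norm_eq_abs, he_def]
  -- decomposition of the target vector
  have hdecomp : m' • a - m • c - m' • T (p' - p) - (m' - m) • a - (m' * (m' - m)) • x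
      = -(m' • (b - a - T (p - p'))) + (m' • b - m • c - (m' - m) • w)
        + (m' - m) • (b - a) + (m' * (m' - m)) • (y - x) := by
    have hT : T (p - p') = -T (p' - p) := by
      rw [← map_neg]; congr 1; abel
    rw [hT, hw_def]
    module
  rw [hdecomp]
  have habs : |m'| = m' := abs_of_pos hm'
  have n1 : ‖-(m' • (b - a - T (p - p')))‖ ≤ (M + e) * (Cb * D ^ 2) := by
    rw [norm_neg, norm_smul, Real.norm_eq_abs, habs]
    exact mul_le_mul hme tA (norm_nonneg _) (by linarith)
  have n3 : ‖(m' - m) • (b - a)‖ ≤ e * (Cb * D) := by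
    rw [norm_smul, Real.norm_eq_abs, ← he_def]
    exact mul_le_mul_of_nonneg_left lipHp he
  have n4 : ‖(m' * (m' - m)) • (y - x)‖ ≤ (M + e) * e * (Cb * D) := by
    rw [norm_smul, Real.norm_eq_abs, abs_mul, habs, ← he_def]
    have h1 : m' * e ≤ (M + e) * e := by nlinarith
    exact mul_le_mul h1 lipHpm (norm_nonneg _) (by nlinarith)
  have hsum : ‖-(m' • (b - a - T (p - p'))) + (m' • b - m • c - (m' - m) • w)
        + (m' - m) • (b - a) + (m' * (m' - m)) • (y - x)‖
      ≤ (M + e) * (Cb * D ^ 2) + K * e * e + e * (Cb * D) + (M + e) * e * (Cb * D) := by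
    calc ‖-(m' • (b - a - T (p - p'))) + (m' • b - m • c - (m' - m) • w)
          + (m' - m) • (b - a) + (m' * (m' - m)) • (y - x)‖
        ≤ ‖-(m' • (b - a - T (p - p'))) + (m' • b - m • c - (m' - m) • w)
          + (m' - m) • (b - a)‖ + ‖(m' * (m' - m)) • (y - x)‖ := norm_add_le _ _
      _ ≤ (‖-(m' • (b - a - T (p - p'))) + (m' • b - m • c - (m' - m) • w)‖
          + ‖(m' - m) • (b - a)‖) + ‖(m' * (m' - m)) • (y - x)‖ :=
          add_le_add_left (norm_add_le _ _) _
      _ ≤ ((‖-(m' • (b - a - T (p - p')))‖ + ‖m' • b - m • c - (m' - m) • w‖)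
          + ‖(m' - m) • (b - a)‖) + ‖(m' * (m' - m)) • (y - x)‖ :=
          add_le_add_left (add_le_add_left (norm_add_le _ _) _) _
      _ ≤ (M + e) * (Cb * D ^ 2) + K * e * e + e * (Cb * D) + (M + e) * e * (Cb * D) :=
          add_le_add (add_le_add (add_le_add n1 tB) n3) n4
  refine le_trans hsum ?_
  -- final arithmetic
  rw [hK_def]
  have am1 : e * D ^ 2 ≤ (e ^ 2 + D ^ 4) / 2 := by nlinarith [sq_nonneg (e - D ^ 2)]
  have am2 : e * D ≤ (e ^ 2 + D ^ 2) / 2 := by nlinarith [sq_nonneg (e - D)]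
  have am3 : e ^ 2 * D ≤ (e ^ 4 + D ^ 2) / 2 := by nlinarith [sq_nonneg (e ^ 2 - D)]
  nlinarith [mul_le_mul_of_nonneg_left am1 hCb.le,
    mul_le_mul_of_nonneg_left am2 hCb.le,
    mul_le_mul_of_nonneg_left am3 hCb.le,
    mul_le_mul_of_nonneg_left am2 (mul_nonneg hCb.le hM.le),
    mul_nonneg (mul_nonneg hCb.le hR.le) (pow_nonneg he 3),
    mul_nonneg (mul_nonneg hCb.le hR.le) (pow_nonneg he 2),
    mul_nonneg (mul_nonneg hCb.le hR.le) (pow_nonneg he 6),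
    mul_nonneg (mul_nonneg hCb.le hR.le) (pow_nonneg hD 2),
    mul_nonneg (mul_nonneg hCb.le hR.le) (pow_nonneg hD 4),
    mul_nonneg (mul_nonneg hCb.le hM.le) (pow_nonneg hD 2),
    mul_nonneg (mul_nonneg hCb.le hM.le) (pow_nonneg he 2),
    mul_nonneg (mul_nonneg (mul_nonneg hCb.le hR.le) hM.le) (pow_nonneg he 2),
    mul_nonneg (mul_nonneg (mul_nonneg hCb.le hR.le) hM.le) (pow_nonneg he 3),
    pow_nonneg hD 2, pow_nonneg he 2, pow_nonneg hD 4, pow_nonneg he 4,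
    pow_nonneg he 3, pow_nonneg he 6,
    mul_nonneg hCb.le (pow_nonneg he 4), mul_nonneg hCb.le (pow_nonneg hD 4),
    mul_nonneg hCb.le (pow_nonneg he 6), mul_nonneg hCb.le (pow_nonneg he 3),
    mul_nonneg hCb.le (pow_nonneg he 2), mul_nonneg hCb.le (pow_nonneg hD 2)]
end
end

section
/- Let K > 1 and let p, q, P, Q ≥ 0 be real numbers such that p + q ≤ 1/(12K) and P + Q ≤ K·[p² + p⁴ + q² + q³ + q⁴ + q⁶ + (p + q + p² + p⁴ + q² + q⁴)·(P + Q)]. Then P + Q ≤ (32K/3)·(p + q)², and consequently P + Q ≤ 2/(27K) < 1/(12K). -/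
set_option maxHeartbeats 1000000

/-- the one-step estimate in the induction proving quadratic
convergence of Newton's method. If `K > 1`, `p, q, P, Q ≥ 0`, `p + q ≤ 1/(12K)`
and `P + Q ≤ K·[p² + p⁴ + q² + q³ + q⁴ + q⁶ + (p + q + p² + p⁴ + q² + q⁴)(P+Q)]`,
then `P + Q ≤ (32K/3)(p+q)²`, and consequently `P + Q ≤ 2/(27K) < 1/(12K)`. -/
theorem newton_one_step_estimate (K p q P Q : ℝ) (hK : 1 < K)
    (hp : 0 ≤ p) (hq : 0 ≤ q) (hP : 0 ≤ P) (hQ : 0 ≤ Q)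
    (h1 : p + q ≤ 1 / (12 * K))
    (h2 : P + Q ≤ K * (p ^ 2 + p ^ 4 + q ^ 2 + q ^ 3 + q ^ 4 + q ^ 6 +
      (p + q + p ^ 2 + p ^ 4 + q ^ 2 + q ^ 4) * (P + Q))) :
    P + Q ≤ 32 * K / 3 * (p + q) ^ 2 ∧
      P + Q ≤ 2 / (27 * K) ∧ 2 / (27 * K) < 1 / (12 * K) := by
  have hK0 : (0:ℝ) < K := by linarith
  have h12K : (0:ℝ) < 12 * K := by linarith
  have hsK : (p + q) * (12 * K) ≤ 1 := by
    rwa [le_div_iff₀ h12K] at h1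
  have hs : p + q ≤ 1 / 12 := by nlinarith
  have hp12 : p ≤ 1/12 := by linarith
  have hq12 : q ≤ 1/12 := by linarith
  have hpsq : p^2 ≤ 1/144 := by nlinarith
  have hqsq : q^2 ≤ 1/144 := by nlinarith
  -- per-term bounds
  have hp4 : p ^ 4 ≤ p ^ 2 / 144 := by nlinarith [sq_nonneg p]
  have hq3 : q ^ 3 ≤ q ^ 2 / 12 := by nlinarith [sq_nonneg q]
  have hq4 : q ^ 4 ≤ q ^ 2 / 144 := by nlinarith [sq_nonneg q]
  have hq6 : q ^ 6 ≤ q ^ 2 / 144 := by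
    have h64 : q ^ 6 ≤ q ^ 4 / 144 := by
      have h := mul_le_mul_of_nonneg_right hqsq (pow_nonneg hq 4)
      calc q ^ 6 = q ^ 2 * q ^ 4 := by ring
        _ ≤ (1/144) * q ^ 4 := h
        _ = q ^ 4 / 144 := by ring
    nlinarith [sq_nonneg q]
  have hp2l : p ^ 2 ≤ p / 12 := by
    have h := mul_le_mul_of_nonneg_left hp12 hp
    calc p ^ 2 = p * p := by ring
      _ ≤ p * (1/12) := h
      _ = p / 12 := by ring
  have hq2l : q ^ 2 ≤ q / 12 := by
    have h := mul_le_mul_of_nonneg_left hq12 hq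
    calc q ^ 2 = q * q := by ring
      _ ≤ q * (1/12) := h
      _ = q / 12 := by ring
  have hp4l : p ^ 4 ≤ p / 12 := by linarith
  have hq4l : q ^ 4 ≤ q / 12 := by linarith
  have hA : p ^ 2 + p ^ 4 + q ^ 2 + q ^ 3 + q ^ 4 + q ^ 6 ≤ (11/10) * (p+q)^2 := by
    have hsq2 : p ^ 2 + q ^ 2 ≤ (p + q) ^ 2 := by nlinarith [mul_nonneg hp hq]
    linarith [sq_nonneg p, sq_nonneg q]
  have hB : K * (p + q + p ^ 2 + p ^ 4 + q ^ 2 + q ^ 4) * (P + Q) ≤ (1/10) * (P + Q) := by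
    have hc1 : p + q + p ^ 2 + p ^ 4 + q ^ 2 + q ^ 4 ≤ (p+q) * (7/6) := by linarith
    have hc : K * (p + q + p ^ 2 + p ^ 4 + q ^ 2 + q ^ 4) ≤ 1/10 := by
      have h3 : K * (p + q + p ^ 2 + p ^ 4 + q ^ 2 + q ^ 4) ≤ K * ((p+q) * (7/6)) :=
        mul_le_mul_of_nonneg_left hc1 (le_of_lt hK0)
      nlinarith
    have := mul_le_mul_of_nonneg_right hc (by linarith : (0:ℝ) ≤ P + Q)
    nlinarith [sq_nonneg q]
  have hE : P + Q ≤ 32 * K / 3 * (p + q) ^ 2 := by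
    have hKA : K * (p ^ 2 + p ^ 4 + q ^ 2 + q ^ 3 + q ^ 4 + q ^ 6) ≤ K * ((11/10) * (p+q)^2) :=
      mul_le_mul_of_nonneg_left hA (le_of_lt hK0)
    nlinarith [h2, hB, hKA]
  refine ⟨hE, ?_, ?_⟩
  · have hs2 : (p+q)^2 ≤ (1/(12*K))^2 := by
      have : 0 ≤ p + q := by linarith
      exact pow_le_pow_left₀ this h1 2
    have : 32 * K / 3 * (p + q) ^ 2 ≤ 32 * K / 3 * (1/(12*K))^2 :=
      mul_le_mul_of_nonneg_left hs2 (by positivity)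
    have heq : 32 * K / 3 * (1/(12*K))^2 = 2/(27*K) := by
      field_simp; ring
    nlinarith [sq_nonneg q]
  · rw [div_lt_div_iff₀ (by linarith) h12K]; linarith
end

section
/- Let K > 1 and let (p_n)_{n≥0}, (q_n)_{n≥0} be sequences of nonnegative real numbers such that p₀ + q₀ ≤ 1/(12K) and, for every n ≥ 1, p_n + q_n ≤ K·[p_{n-1}² + p_{n-1}⁴ + q_{n-1}² + q_{n-1}³ + q_{n-1}⁴ + q_{n-1}⁶ + (p_{n-1} + q_{n-1} + p_{n-1}² + p_{n-1}⁴ + q_{n-1}² + q_{n-1}⁴)·(p_n + q_n)]. Then for every n ≥ 0, p_n + q_n ≤ (3/(32K))·(8/9)^{2^n}; in particular p_n + q_n → 0. -/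
set_option maxHeartbeats 1000000 in
lemma newton_step (K E a b e' : ℝ) (hK : 1 < K) (ha : 0 ≤ a) (hb : 0 ≤ b)
    (habE : a + b ≤ E) (hE : E ≤ 1 / (12 * K)) (he' : 0 ≤ e')
    (hrec : e' ≤ K * (a^2 + a^4 + b^2 + b^3 + b^4 + b^6 +
      (a + b + a^2 + a^4 + b^2 + b^4) * e')) :
    e' ≤ 32 * K / 3 * E ^ 2 := by
  have hK0 : (0:ℝ) < K := by linarith
  have haE : a ≤ E := by linarith
  have hbE : b ≤ E := by linarith
  have hE0 : 0 ≤ E := by linarith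
  have hE12 : E ≤ 1/12 := by
    have : 1 / (12*K) ≤ 1/12 := by
      rw [div_le_div_iff₀ (by linarith) (by norm_num)]; nlinarith
    linarith
  have ha2 : a^2 ≤ E^2 := by nlinarith
  have hb2 : b^2 ≤ E^2 := by nlinarith
  have hE2 : E^2 ≤ E * (1/12) := by nlinarith [mul_le_mul_of_nonneg_left hE12 hE0]
  have hE144 : E^2 ≤ 1/144 := by nlinarith
  have ha4 : a^4 ≤ E^2 * (1/144) := by nlinarith [pow_le_pow_left₀ ha haE 4, sq_nonneg E]
  have hb4 : b^4 ≤ E^2 * (1/144) := by nlinarith [pow_le_pow_left₀ hb hbE 4, sq_nonneg E]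
  have hb3 : b^3 ≤ E^2 * (1/12) := by nlinarith [pow_le_pow_left₀ hb hbE 3, sq_nonneg E]
  have hb6 : b^6 ≤ E^2 * (1/144) := by
    have h1 : b^6 ≤ E^6 := pow_le_pow_left₀ hb hbE 6
    have h2 : (E^2)^2 ≤ ((1:ℝ)/144)^2 := pow_le_pow_left₀ (sq_nonneg E) hE144 2
    have h3 := mul_le_mul_of_nonneg_left h2 (sq_nonneg E)
    have h4 : E^2 * ((1:ℝ)/144)^2 ≤ E^2 * (1/144) := by nlinarith [sq_nonneg E]
    calc b^6 ≤ E^6 := h1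
      _ = E^2 * (E^2)^2 := by ring
      _ ≤ E^2 * ((1:ℝ)/144)^2 := h3
      _ ≤ E^2 * (1/144) := h4
  have hA : a^2 + a^4 + b^2 + b^3 + b^4 + b^6 ≤ 3 * E^2 := by linarith [sq_nonneg E]
  have hE2' : E^2 * (1/144) ≤ E * (1/12) := by linarith [sq_nonneg E]
  have hB : a + b + a^2 + a^4 + b^2 + b^4 ≤ 2 * E := by linarith
  have hKE : K * E ≤ 1/12 := by
    calc K * E ≤ K * (1/(12*K)) := mul_le_mul_of_nonneg_left hE hK0.le
    _ = 1/12 := by field_simp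
  have hBe : K * ((a + b + a^2 + a^4 + b^2 + b^4) * e') ≤ (1/6) * e' := by
    have h1 : K * ((a + b + a^2 + a^4 + b^2 + b^4) * e') ≤ K * (2 * E * e') := by
      apply mul_le_mul_of_nonneg_left _ hK0.le
      exact mul_le_mul_of_nonneg_right hB he'
    have h2 : (K * E) * e' ≤ (1/12) * e' := mul_le_mul_of_nonneg_right hKE he'
    have h3 : K * (2 * E * e') = 2 * ((K * E) * e') := by ring
    linarith
  have hAe : K * (a^2 + a^4 + b^2 + b^3 + b^4 + b^6) ≤ K * (3 * E^2) :=
    mul_le_mul_of_nonneg_left hA hK0.le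
  have hsplit : K * (a^2 + a^4 + b^2 + b^3 + b^4 + b^6 +
      (a + b + a^2 + a^4 + b^2 + b^4) * e') =
      K * (a^2 + a^4 + b^2 + b^3 + b^4 + b^6) +
      K * ((a + b + a^2 + a^4 + b^2 + b^4) * e') := by ring
  have hmain : e' ≤ K * (3 * E^2) + (1/6) * e' := by
    rw [hsplit] at hrec; linarith
  have hKE2 : 0 ≤ K * E^2 := mul_nonneg hK0.le (sq_nonneg E)
  have h5 : K * (3 * E^2) = 3 * (K * E^2) := by ring
  have h6 : 32 * K / 3 * E^2 = (32/3) * (K * E^2) := by ring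
  rw [h6]; linarith

/-- the recurrence satisfied by the Newton errors implies
quadratic decay. If `K > 1`, `p_n, q_n ≥ 0`, `p₀ + q₀ ≤ 1/(12K)` and for all
`n ≥ 1` the recurrence inequality of the paper holds, then
`p_n + q_n ≤ (3/(32K))·(8/9)^(2^n)` for every `n`, and `p_n + q_n → 0`. -/
theorem newton_error_recurrence (K : ℝ) (hK : 1 < K) (p q : ℕ → ℝ)
    (hp : ∀ n, 0 ≤ p n) (hq : ∀ n, 0 ≤ q n)
    (h0 : p 0 + q 0 ≤ 1 / (12 * K))
    (hrec : ∀ n : ℕ, 1 ≤ n →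
      p n + q n ≤ K * (p (n - 1) ^ 2 + p (n - 1) ^ 4 + q (n - 1) ^ 2 +
        q (n - 1) ^ 3 + q (n - 1) ^ 4 + q (n - 1) ^ 6 +
        (p (n - 1) + q (n - 1) + p (n - 1) ^ 2 + p (n - 1) ^ 4 +
          q (n - 1) ^ 2 + q (n - 1) ^ 4) * (p n + q n))) :
    (∀ n : ℕ, p n + q n ≤ 3 / (32 * K) * (8 / 9 : ℝ) ^ 2 ^ n) ∧
      Filter.Tendsto (fun n => p n + q n) Filter.atTop (nhds 0) := by
  have hK0 : (0:ℝ) < K := by linarith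
  have key : ∀ n : ℕ, p n + q n ≤ 3 / (32 * K) * (8 / 9 : ℝ) ^ 2 ^ n := by
    intro n
    induction n with
    | zero =>
      have he : (3:ℝ) / (32 * K) * (8 / 9 : ℝ) ^ 2 ^ 0 = 1 / (12 * K) := by
        rw [pow_zero, pow_one]; field_simp; ring
      rw [he]; exact h0
    | succ n ih =>
      set E : ℝ := 3 / (32 * K) * (8 / 9 : ℝ) ^ 2 ^ n with hEdef
      have hpownn : (0:ℝ) ≤ (8/9:ℝ) ^ 2 ^ n := by positivity
      have hpow1 : (8/9:ℝ) ^ 2 ^ n ≤ (8/9:ℝ) ^ 1 :=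
        pow_le_pow_of_le_one (by norm_num) (by norm_num) Nat.one_le_two_pow
      have hE : E ≤ 1 / (12 * K) := by
        have h1 : E ≤ 3 / (32 * K) * (8/9 : ℝ) ^ 1 := by
          apply mul_le_mul_of_nonneg_left hpow1 (by positivity)
        have h2 : (3:ℝ) / (32 * K) * (8/9 : ℝ) ^ 1 = 1 / (12 * K) := by
          rw [pow_one]; field_simp; ring
        linarith
      have hr := hrec (n + 1) (by omega)
      simp only [Nat.add_sub_cancel] at hr
      have hstep := newton_step K E (p n) (q n) (p (n+1) + q (n+1)) hK
        (hp n) (hq n) ih hE (add_nonneg (hp (n+1)) (hq (n+1))) hr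
      have hpow : (8/9:ℝ) ^ 2 ^ (n+1) = ((8/9:ℝ) ^ 2 ^ n) ^ 2 := by
        rw [pow_succ, pow_mul]
      have heq : 32 * K / 3 * E ^ 2 = 3 / (32 * K) * (8/9:ℝ) ^ 2 ^ (n+1) := by
        rw [hpow, hEdef]; field_simp
      linarith
  refine ⟨key, ?_⟩
  have hb : ∀ n : ℕ, p n + q n ≤ 3 / (32 * K) * (8/9:ℝ) ^ n := by
    intro n
    have h1 : (8/9:ℝ) ^ 2 ^ n ≤ (8/9:ℝ) ^ n :=
      pow_le_pow_of_le_one (by norm_num) (by norm_num) (Nat.lt_two_pow_self).le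
    have h2 : 3 / (32 * K) * (8/9:ℝ) ^ 2 ^ n ≤ 3 / (32 * K) * (8/9:ℝ) ^ n :=
      mul_le_mul_of_nonneg_left h1 (by positivity)
    linarith [key n]
  have hg : Filter.Tendsto (fun n : ℕ => 3 / (32 * K) * (8/9:ℝ) ^ n)
      Filter.atTop (nhds 0) := by
    have := (tendsto_pow_atTop_nhds_zero_of_lt_one (by norm_num : (0:ℝ) ≤ 8/9)
      (by norm_num : (8/9:ℝ) < 1)).const_mul (3 / (32 * K))
    simpa using this
  exact squeeze_zero (fun n => add_nonneg (hp n) (hq n)) hb hg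
end
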